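/- A commutative algebra over ℂ satisfying the terminal identity [[[P,a],P],P] = 0 for all a is a Jordan algebra, i.e., it satisfies (x²y)x = x²(yx). -/
import Mathlib


def kbr1 {V : Type*} [AddCommGroup V] (A : V → V) (B : V → V → V) : V → V → V :=
  fun x y => A (B x y) - B (A x) y - B x (A y)

def kbr2 {V : Type*} [AddCommGroup V] (B C : V → V → V) : V → V → V → V :=
  fun x y z => B (C x y) z + B x (C y z) + B y (C x z)
    - C (B x y) z - C x (B y z) - C y (B x z)

def IsTerminal {V : Type*} [AddCommGroup V] (P : V → V → V) : Prop :=
  ∀ a x y z, kbr2 (kbr1 (fun w => P a w) P) P x y z = 0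

/-- A commutative algebra over ℂ satisfying the terminal identity is a Jordan algebra:
it satisfies `(x·x)·(y·x) = ((x·x)·y)·x`. -/
theorem stmt1 {V : Type*} [AddCommGroup V] [Module ℂ V]
    (mul : V →ₗ[ℂ] V →ₗ[ℂ] V)
    (hcomm : ∀ x y, mul x y = mul y x)
    (hterm : IsTerminal (fun x y => mul x y)) :
    ∀ x y, mul (mul x x) (mul y x) = mul (mul (mul x x) y) x := by
  intro x y
  have h := hterm x x x y
  simp only [kbr1, kbr2, map_sub, LinearMap.sub_apply] at h
  rw [hcomm x (mul x x)] at h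
  rw [hcomm y x, hcomm (mul (mul x x) y) x]
  have h3 : (3:ℂ) • (mul x (mul (mul x x) y) - mul (mul x x) (mul x y)) = 0 := by
    rw [← h]; module
  have h4 : mul x (mul (mul x x) y) - mul (mul x x) (mul x y) = 0 := by
    have := congrArg (fun v => ((3:ℂ)⁻¹) • v) h3
    simpa [smul_smul] using this
  exact (sub_eq_zero.mp h4).symm
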